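/- Let ρ: SL₂(ℝ) → GL₃(ℝ) be given by ρ([[a,b],[c,d]]) = [[a², 2ab, b²],[ac, ad+bc, bd],[c², 2cd, d²]]. If ρ(A) has all integer entries for some A = [[a,b],[c,d]] ∈ SL₂(ℝ), then A ∈ SL₂(ℤ), i.e., a, b, c, d are all integers. -/
import Mathlib

lemma sq_of_even_factorization (n : ℕ) (hn : n ≠ 0) (h : ∀ p, Even (n.factorization p)) :
    IsSquare n := by
  refine ⟨n.factorization.prod fun p e => p ^ (e / 2), ?_⟩
  rw [← Finsupp.prod_mul]
  conv_lhs => rw [← Nat.factorization_prod_pow_eq_self hn]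
  apply Finsupp.prod_congr
  intro p hp
  rw [← pow_add]
  congr 1
  obtain ⟨k, hk⟩ := h p
  omega

lemma aux1 (A B C D R S P : ℕ) (hA : A ≠ 0) (hB : B ≠ 0) (hC : C ≠ 0) (hD : D ≠ 0)
    (h1 : A * D = R ^ 2) (h2 : B * C = S ^ 2) (h3 : A * B = P ^ 2)
    (hcop : ∀ p, p.Prime → p ∣ R → p ∣ S → False) : IsSquare A := by
  apply sq_of_even_factorization A hA
  intro p
  by_cases hp : p.Prime
  · have e1 : A.factorization p + D.factorization p = 2 * R.factorization p := by
      have h' := Nat.factorization_mul hA hD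
      rw [h1, Nat.factorization_pow] at h'
      have := DFunLike.congr_fun h' p
      simpa [mul_comm] using this.symm
    have e2 : B.factorization p + C.factorization p = 2 * S.factorization p := by
      have h' := Nat.factorization_mul hB hC
      rw [h2, Nat.factorization_pow] at h'
      have := DFunLike.congr_fun h' p
      simpa [mul_comm] using this.symm
    have e3 : A.factorization p + B.factorization p = 2 * P.factorization p := by
      have h' := Nat.factorization_mul hA hB
      rw [h3, Nat.factorization_pow] at h'
      have := DFunLike.congr_fun h' p
      simpa [mul_comm] using this.symm
    by_contra hev
    rw [Nat.not_even_iff_odd] at hev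
    obtain ⟨k, hk⟩ := hev
    have hpR : p ∣ R := Nat.dvd_of_factorization_pos (by omega)
    have fS0 : S.factorization p = 0 :=
      Nat.factorization_eq_zero_of_not_dvd (fun hd => hcop p hp hpR hd)
    omega
  · simp [Nat.factorization_eq_zero_of_not_prime _ hp]

lemma nat_main (A B C D R S P U : ℕ)
    (h1 : A * D = R ^ 2) (h2 : B * C = S ^ 2) (h3 : A * B = P ^ 2) (h4 : C * D = U ^ 2)
    (hcop : ∀ p, p.Prime → p ∣ R → p ∣ S → False) :
    IsSquare A ∧ IsSquare B ∧ IsSquare C ∧ IsSquare D := by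
  rcases eq_or_ne R 0 with hR | hR
  · -- R = 0 : S has no prime divisors and S ≠ 0, so S = 1
    have hS1 : S = 1 := by
      rcases eq_or_ne S 0 with h0 | h0
      · exact absurd (hcop 2 Nat.prime_two (hR ▸ dvd_zero 2) (h0 ▸ dvd_zero 2)) (by simp)
      · by_contra hne
        obtain ⟨p, hp, hpd⟩ := Nat.exists_prime_and_dvd hne
        exact hcop p hp (hR ▸ dvd_zero p) hpd
    subst hS1
    have hBC : B = 1 ∧ C = 1 := by
      have : B * C = 1 := by simpa using h2
      exact ⟨Nat.eq_one_of_mul_eq_one_right this, Nat.eq_one_of_mul_eq_one_left this⟩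
    obtain ⟨hB1, hC1⟩ := hBC
    subst hB1; subst hC1
    have hAD : A * D = 0 := by simp [h1, hR]
    rcases Nat.mul_eq_zero.mp hAD with hA0 | hD0
    · subst hA0
      refine ⟨⟨0, rfl⟩, ⟨1, rfl⟩, ⟨1, rfl⟩, ⟨U, ?_⟩⟩
      have : D = U ^ 2 := by simpa using h4
      rw [this]; ring
    · subst hD0
      refine ⟨⟨P, ?_⟩, ⟨1, rfl⟩, ⟨1, rfl⟩, ⟨0, rfl⟩⟩
      have : A = P ^ 2 := by simpa using h3
      rw [this]; ring
  rcases eq_or_ne S 0 with hS | hS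
  · -- S = 0 : R = 1
    have hR1 : R = 1 := by
      by_contra hne
      obtain ⟨p, hp, hpd⟩ := Nat.exists_prime_and_dvd hne
      exact hcop p hp hpd (hS ▸ dvd_zero p)
    subst hR1
    have hAD : A = 1 ∧ D = 1 := by
      have h1' : A * D = 1 := by simpa using h1
      exact ⟨Nat.eq_one_of_mul_eq_one_right h1', Nat.eq_one_of_mul_eq_one_left h1'⟩
    obtain ⟨hA1, hD1⟩ := hAD
    subst hA1; subst hD1
    refine ⟨⟨1, rfl⟩, ⟨P, ?_⟩, ⟨U, ?_⟩, ⟨1, rfl⟩⟩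
    · have : B = P ^ 2 := by simpa using h3
      rw [this]; ring
    · have : C = U ^ 2 := by simpa using h4
      rw [this]; ring
  · -- both nonzero
    have hA : A ≠ 0 := by
      intro h0; apply hR; have : R ^ 2 = 0 := by rw [← h1, h0]; ring
      exact pow_eq_zero_iff (by norm_num) |>.mp this
    have hD : D ≠ 0 := by
      intro h0; apply hR; have : R ^ 2 = 0 := by rw [← h1, h0]; ring
      exact pow_eq_zero_iff (by norm_num) |>.mp this
    have hB : B ≠ 0 := by
      intro h0; apply hS; have : S ^ 2 = 0 := by rw [← h2, h0]; ring
      exact pow_eq_zero_iff (by norm_num) |>.mp this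
    have hC : C ≠ 0 := by
      intro h0; apply hS; have : S ^ 2 = 0 := by rw [← h2, h0]; ring
      exact pow_eq_zero_iff (by norm_num) |>.mp this
    refine ⟨aux1 A B C D R S P hA hB hC hD h1 h2 h3 hcop,
           aux1 B A D C S R P hB hA hD hC h2 h1 (by rw [mul_comm]; exact h3)
             (fun p hp hx hy => hcop p hp hy hx),
           aux1 C D A B S R U hC hD hA hB (by rw [mul_comm]; exact h2)
             (by rw [mul_comm]; exact h1) h4 (fun p hp hx hy => hcop p hp hy hx),
           aux1 D C B A R S U hD hC hB hA (by rw [mul_comm]; exact h1)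
             (by rw [mul_comm]; exact h2) (by rw [mul_comm]; exact h4) hcop⟩

lemma ext_helper (x : ℝ) (n : ℕ) (hx : ((n : ℕ) : ℝ) = x ^ 2) (hs : IsSquare n) :
    ∃ m : ℤ, (m : ℝ) = x := by
  obtain ⟨m, hm⟩ := hs
  rw [hm] at hx
  push_cast at hx
  have hz : (x - (m : ℝ)) * (x + (m : ℝ)) = 0 := by linear_combination -hx
  rcases mul_eq_zero.mp hz with h0 | h0
  · exact ⟨(m : ℤ), by push_cast; linarith⟩
  · exact ⟨-(m : ℤ), by push_cast; linarith⟩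

/-- if A = [[a,b],[c,d]] ∈ SL₂(ℝ) and all entries of
ρ(A) = [[a²,2ab,b²],[ac,ad+bc,bd],[c²,2cd,d²]] are integers, then a,b,c,d ∈ ℤ. -/
theorem stmt_9 (a b c d : ℝ) (h : a * d - b * c = 1)
    (h1 : ∃ m : ℤ, (m : ℝ) = a ^ 2) (h2 : ∃ m : ℤ, (m : ℝ) = 2 * a * b)
    (h3 : ∃ m : ℤ, (m : ℝ) = b ^ 2) (h4 : ∃ m : ℤ, (m : ℝ) = a * c)
    (h5 : ∃ m : ℤ, (m : ℝ) = a * d + b * c) (h6 : ∃ m : ℤ, (m : ℝ) = b * d)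
    (h7 : ∃ m : ℤ, (m : ℝ) = c ^ 2) (h8 : ∃ m : ℤ, (m : ℝ) = 2 * c * d)
    (h9 : ∃ m : ℤ, (m : ℝ) = d ^ 2) :
    (∃ m : ℤ, (m : ℝ) = a) ∧ (∃ m : ℤ, (m : ℝ) = b) ∧
    (∃ m : ℤ, (m : ℝ) = c) ∧ (∃ m : ℤ, (m : ℝ) = d) := by
  obtain ⟨Za, hZa⟩ := h1
  obtain ⟨P2, hP2⟩ := h2
  obtain ⟨Zb, hZb⟩ := h3
  obtain ⟨K, hK⟩ := h5
  obtain ⟨Zc, hZc⟩ := h7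
  obtain ⟨U2, hU2⟩ := h8
  obtain ⟨Zd, hZd⟩ := h9
  -- ab is an integer
  have iP2 : P2 ^ 2 = 4 * (Za * Zb) := by
    have : ((P2 : ℝ)) ^ 2 = 4 * ((Za : ℝ) * (Zb : ℝ)) := by
      rw [hP2, hZa, hZb]; ring
    exact_mod_cast this
  have hP2even : Even P2 := by
    have : Even (P2 ^ 2) := ⟨2 * (Za * Zb), by linarith⟩
    exact (Int.even_pow.mp this).1
  obtain ⟨P, hP⟩ := hP2even
  have habR : ((P : ℤ) : ℝ) = a * b := by
    have hc : ((P2 : ℤ) : ℝ) = ((P : ℝ) + (P : ℝ)) := by push_cast [hP]; ring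
    rw [hP2] at hc; linarith
  -- cd is an integer
  have iU2 : U2 ^ 2 = 4 * (Zc * Zd) := by
    have : ((U2 : ℝ)) ^ 2 = 4 * ((Zc : ℝ) * (Zd : ℝ)) := by
      rw [hU2, hZc, hZd]; ring
    exact_mod_cast this
  have hU2even : Even U2 := by
    have : Even (U2 ^ 2) := ⟨2 * (Zc * Zd), by linarith⟩
    exact (Int.even_pow.mp this).1
  obtain ⟨U, hU⟩ := hU2even
  have hcdR : ((U : ℤ) : ℝ) = c * d := by
    have hc : ((U2 : ℤ) : ℝ) = ((U : ℝ) + (U : ℝ)) := by push_cast [hU]; ring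
    rw [hU2] at hc; linarith
  -- K is odd; ad = r+1, bc = r
  have iK : K ^ 2 = 1 + 4 * (P * U) := by
    have : ((K : ℝ)) ^ 2 = 1 + 4 * ((P : ℝ) * (U : ℝ)) := by
      rw [hK, habR, hcdR]
      linear_combination (a * d - b * c + 1) * h
    exact_mod_cast this
  have hKodd : Odd K := by
    rcases Int.even_or_odd K with he | ho
    · exfalso
      obtain ⟨t, ht⟩ := he
      rw [ht] at iK
      have h2 : (2 : ℤ) ∣ 1 := ⟨2 * (t * t) - 2 * (P * U), by linear_combination -iK⟩
      norm_num at h2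
    · exact ho
  obtain ⟨r, hr⟩ := hKodd
  have hKR : (K : ℝ) = 2 * (r : ℝ) + 1 := by push_cast [hr]; ring
  have had : (((r + 1 : ℤ)) : ℝ) = a * d := by push_cast; rw [hK] at hKR; linarith
  have hbc : (((r : ℤ)) : ℝ) = b * c := by push_cast; rw [hK] at hKR; linarith
  -- squares are nonnegative
  have hZa0 : 0 ≤ Za := by have : (0 : ℝ) ≤ (Za : ℝ) := by rw [hZa]; positivity
                           exact_mod_cast this
  have hZb0 : 0 ≤ Zb := by have : (0 : ℝ) ≤ (Zb : ℝ) := by rw [hZb]; positivity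
                           exact_mod_cast this
  have hZc0 : 0 ≤ Zc := by have : (0 : ℝ) ≤ (Zc : ℝ) := by rw [hZc]; positivity
                           exact_mod_cast this
  have hZd0 : 0 ≤ Zd := by have : (0 : ℝ) ≤ (Zd : ℝ) := by rw [hZd]; positivity
                           exact_mod_cast this
  lift Za to ℕ using hZa0 with nA
  lift Zb to ℕ using hZb0 with nB
  lift Zc to ℕ using hZc0 with nC
  lift Zd to ℕ using hZd0 with nD
  -- integer equations
  have iAD : (nA : ℤ) * (nD : ℤ) = (r + 1) ^ 2 := by
    have : ((nA : ℤ) : ℝ) * ((nD : ℤ) : ℝ) = (((r + 1 : ℤ)) : ℝ) ^ 2 := by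
      rw [hZa, hZd, had]; ring
    exact_mod_cast this
  have iBC : (nB : ℤ) * (nC : ℤ) = r ^ 2 := by
    have : ((nB : ℤ) : ℝ) * ((nC : ℤ) : ℝ) = (((r : ℤ)) : ℝ) ^ 2 := by
      rw [hZb, hZc, hbc]; ring
    exact_mod_cast this
  have iAB : (nA : ℤ) * (nB : ℤ) = P ^ 2 := by
    have : ((nA : ℤ) : ℝ) * ((nB : ℤ) : ℝ) = ((P : ℤ) : ℝ) ^ 2 := by
      rw [hZa, hZb, habR]; ring
    exact_mod_cast this
  have iCD : (nC : ℤ) * (nD : ℤ) = U ^ 2 := by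
    have : ((nC : ℤ) : ℝ) * ((nD : ℤ) : ℝ) = ((U : ℤ) : ℝ) ^ 2 := by
      rw [hZc, hZd, hcdR]; ring
    exact_mod_cast this
  -- natural number equations
  have nAD : nA * nD = (r + 1).natAbs ^ 2 := by
    have := congrArg Int.natAbs iAD
    simpa [Int.natAbs_mul, Int.natAbs_pow] using this
  have nBC : nB * nC = r.natAbs ^ 2 := by
    have := congrArg Int.natAbs iBC
    simpa [Int.natAbs_mul, Int.natAbs_pow] using this
  have nAB : nA * nB = P.natAbs ^ 2 := by
    have := congrArg Int.natAbs iAB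
    simpa [Int.natAbs_mul, Int.natAbs_pow] using this
  have nCD : nC * nD = U.natAbs ^ 2 := by
    have := congrArg Int.natAbs iCD
    simpa [Int.natAbs_mul, Int.natAbs_pow] using this
  have hcop : ∀ p, p.Prime → p ∣ (r + 1).natAbs → p ∣ r.natAbs → False := by
    intro p hp hx hy
    have h1' : (p : ℤ) ∣ (r + 1) := Int.natAbs_dvd_natAbs.mp (by simpa using hx)
    have h2' : (p : ℤ) ∣ r := Int.natAbs_dvd_natAbs.mp (by simpa using hy)
    have hd1 : (p : ℤ) ∣ 1 := by
      have := dvd_sub h1' h2'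
      simpa using this
    have hle := Int.le_of_dvd one_pos hd1
    have := hp.two_le
    exact absurd hle (by exact_mod_cast by omega)
  obtain ⟨sA, sB, sC, sD⟩ :=
    nat_main nA nB nC nD (r + 1).natAbs r.natAbs P.natAbs U.natAbs nAD nBC nAB nCD hcop
  exact ⟨ext_helper a nA (by exact_mod_cast hZa) sA,
         ext_helper b nB (by exact_mod_cast hZb) sB,
         ext_helper c nC (by exact_mod_cast hZc) sC,
         ext_helper d nD (by exact_mod_cast hZd) sD⟩
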